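/- Fix n ≥ 2 and a symmetric matrix C_e ∈ ℝ^{n×n}. Let M be orthogonal with A := Mᵀ C_e M, and suppose Ω(M) = 0 but f(M) > 0 (a non-optimal critical point). Then there exist indices i < j with A_{ii} = A_{jj}, A_{ij} ≠ 0, and A_{ij}² ≥ 2 f(M)/(n(n−1)); hence, with Ξ := E_{ij} − E_{ji}, the curve t ↦ f(M exp(tΞ)) has second derivative at t = 0 equal to −8 A_{ij}² ≤ −16 f(M)/(n(n−1)) < 0. In particular every non-optimal critical point admits an explicit negative-curvature (strict saddle) direction. -/

import Mathlib

open Matrix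

/-- The diagonal matrix whose diagonal agrees with `X`. -/
noncomputable def diagPart {n : ℕ} (X : Matrix (Fin n) (Fin n) ℝ) :
    Matrix (Fin n) (Fin n) ℝ :=
  Matrix.diagonal (fun i => X i i)

/-- Frobenius norm of a real square matrix. -/
noncomputable def frobNorm {n : ℕ} (X : Matrix (Fin n) (Fin n) ℝ) : ℝ :=
  Real.sqrt (∑ i, ∑ j, (X i j) ^ 2)

/-- Rotated covariance `A(M) = Mᵀ C_e M`. -/
noncomputable def rotA {n : ℕ} (Ce M : Matrix (Fin n) (Fin n) ℝ) :
    Matrix (Fin n) (Fin n) ℝ := Mᵀ * Ce * M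

/-- The commutator generator `Ω(M) = A D − D A`. -/
noncomputable def genOmega {n : ℕ} (Ce M : Matrix (Fin n) (Fin n) ℝ) :
    Matrix (Fin n) (Fin n) ℝ :=
  rotA Ce M * diagPart (rotA Ce M) - diagPart (rotA Ce M) * rotA Ce M

/-- The diagonalization objective `f(M) = (1/2)‖off(A(M))‖_F²`. -/
noncomputable def objF {n : ℕ} (Ce M : Matrix (Fin n) (Fin n) ℝ) : ℝ :=
  (1 / 2) * frobNorm (rotA Ce M - diagPart (rotA Ce M)) ^ 2

namespace SSX
variable {n : ℕ}

noncomputable def Xi (i j : Fin n) : Matrix (Fin n) (Fin n) ℝ :=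
  Matrix.single i j 1 - Matrix.single j i 1

noncomputable def Pm (i j : Fin n) : Matrix (Fin n) (Fin n) ℝ :=
  Matrix.single i i 1 + Matrix.single j j 1

lemma xi_mul_xi {i j : Fin n} (hij : i ≠ j) : Xi i j * Xi i j = -(Pm i j) := by
  unfold Xi Pm
  rw [sub_mul, mul_sub, mul_sub, single_mul_single_same, single_mul_single_same,
      single_mul_single_of_ne (h := hij.symm), single_mul_single_of_ne (h := hij)]
  rw [mul_one]
  abel

lemma xi_mul_pm {i j : Fin n} (hij : i ≠ j) : Xi i j * Pm i j = Xi i j := by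
  unfold Xi Pm
  rw [sub_mul, mul_add, mul_add, single_mul_single_same, single_mul_single_same,
      single_mul_single_of_ne (h := hij.symm), single_mul_single_of_ne (h := hij)]
  rw [mul_one]
  abel

noncomputable def hmat (i j : Fin n) (t : ℝ) : Matrix (Fin n) (Fin n) ℝ :=
  1 + (Real.cos t - 1) • Pm i j + Real.sin t • Xi i j

lemma xi_mul_hmat {i j : Fin n} (hij : i ≠ j) (t : ℝ) :
    Xi i j * hmat i j t = (-Real.sin t) • Pm i j + Real.cos t • Xi i j := by
  unfold hmat
  rw [mul_add, mul_add, mul_one, Matrix.mul_smul, Matrix.mul_smul, xi_mul_pm hij, xi_mul_xi hij]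
  module

lemma hmat_zero (i j : Fin n) : hmat i j 0 = 1 := by
  simp [hmat]

section withnorm

attribute [local instance] Matrix.linftyOpSemiNormedRing Matrix.linftyOpNormedRing
  Matrix.linftyOpNormedAlgebra

lemma hasDerivAt_hmat (i j : Fin n) (t : ℝ) :
    HasDerivAt (hmat i j) ((-Real.sin t) • Pm i j + Real.cos t • Xi i j) t := by
  unfold hmat
  have h := ((hasDerivAt_const t (1 : Matrix (Fin n) (Fin n) ℝ)).add
    (((Real.hasDerivAt_cos t).sub_const 1).smul_const (Pm i j))).add
    ((Real.hasDerivAt_sin t).smul_const (Xi i j))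
  exact h.congr_deriv (by simp)

lemma exp_givens_aux {i j : Fin n} (hij : i ≠ j) (t : ℝ) :
    NormedSpace.exp (t • Xi i j) = hmat i j t := by
  have key : ∀ s : ℝ, NormedSpace.exp (s • (-Xi i j)) * hmat i j s = 1 := by
    have hcd : ∀ s : ℝ,
        HasDerivAt (fun u : ℝ => NormedSpace.exp (u • (-Xi i j)) * hmat i j u) 0 s := by
      intro s
      have h3 := (hasDerivAt_exp_smul_const (𝕂 := ℝ) (-Xi i j) s).mul (hasDerivAt_hmat i j s)
      refine h3.congr_deriv (Eq.symm ?_)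
      rw [← xi_mul_hmat hij s]
      simp [mul_assoc, mul_neg, neg_mul]
    intro s
    have := is_const_of_deriv_eq_zero (fun u => (hcd u).differentiableAt)
      (fun u => (hcd u).deriv) s 0
    simpa [hmat_zero] using this
  have hinv : NormedSpace.exp (t • Xi i j) * NormedSpace.exp (t • (-Xi i j)) = 1 := by
    rw [← Matrix.exp_add_of_commute _ _
      (((Commute.refl (Xi i j)).neg_right.smul_left t).smul_right t)]
    simp
  calc NormedSpace.exp (t • Xi i j)
      = NormedSpace.exp (t • Xi i j) * (NormedSpace.exp (t • (-Xi i j)) * hmat i j t) := by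
        rw [key t, mul_one]
    _ = hmat i j t := by rw [← mul_assoc, hinv, one_mul]

end withnorm

lemma exp_givens {i j : Fin n} (hij : i ≠ j) (t : ℝ) :
    NormedSpace.exp (t • Xi i j) = hmat i j t :=
  exp_givens_aux hij t

lemma xi_transpose (i j : Fin n) : (Xi i j)ᵀ = -(Xi i j) := by
  unfold Xi
  ext a b
  simp [Matrix.transpose_apply, Matrix.sub_apply, Matrix.single, and_comm]

lemma hmat_orth {i j : Fin n} (hij : i ≠ j) (t : ℝ) :
    (hmat i j t)ᵀ * hmat i j t = 1 := by
  rw [← exp_givens hij, ← Matrix.exp_transpose]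
  have h1 : (t • Xi i j)ᵀ = -(t • Xi i j) := by
    rw [Matrix.transpose_smul, xi_transpose, smul_neg]
  rw [h1, ← Matrix.exp_add_of_commute _ _ ((Commute.refl (t • Xi i j)).neg_left),
    neg_add_cancel, NormedSpace.exp_zero]

lemma hmat_apply_ne {i j p : Fin n} (hpi : p ≠ i) (hpj : p ≠ j) (t : ℝ) (k : Fin n) :
    hmat i j t k p = if k = p then 1 else 0 := by
  simp [hmat, Pm, Xi, Matrix.one_apply, Matrix.single, hpi.symm, hpj.symm,
    Matrix.of_apply]

lemma hmat_apply_i {i j : Fin n} (hij : i ≠ j) (t : ℝ) (k : Fin n) :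
    hmat i j t k i = (if k = i then Real.cos t else 0) + (if k = j then -Real.sin t else 0) := by
  by_cases hki : k = i <;> by_cases hkj : k = j
  · exact absurd (hki.symm.trans hkj) hij
  · subst hki; simp [hmat, Pm, Xi, Matrix.one_apply, Matrix.single, hij, hij.symm, hkj]
  · subst hkj; simp [hmat, Pm, Xi, Matrix.one_apply, Matrix.single, hij, hij.symm]
  · simp [hmat, Pm, Xi, Matrix.one_apply, Matrix.single, hki, hkj,
      Ne.symm hki, Ne.symm hkj, hij.symm]

lemma hmat_apply_j {i j : Fin n} (hij : i ≠ j) (t : ℝ) (k : Fin n) :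
    hmat i j t k j = (if k = j then Real.cos t else 0) + (if k = i then Real.sin t else 0) := by
  by_cases hki : k = i <;> by_cases hkj : k = j
  · exact absurd (hki.symm.trans hkj) hij
  · subst hki; simp [hmat, Pm, Xi, Matrix.one_apply, Matrix.single, hij, hij.symm, hkj]
  · subst hkj; simp [hmat, Pm, Xi, Matrix.one_apply, Matrix.single, hij, hij.symm]
  · simp [hmat, Pm, Xi, Matrix.one_apply, Matrix.single, hki, hkj,
      Ne.symm hki, Ne.symm hkj, hij.symm]

lemma conj_apply (h X : Matrix (Fin n) (Fin n) ℝ) (p q : Fin n) :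
    (hᵀ * X * h) p q = ∑ k, ∑ l, h k p * (X k l * h l q) := by
  rw [Matrix.mul_assoc]
  simp [Matrix.mul_apply, Matrix.transpose_apply, Finset.mul_sum]

lemma conj_pp_ne {i j p : Fin n} (hpi : p ≠ i) (hpj : p ≠ j) (t : ℝ)
    (X : Matrix (Fin n) (Fin n) ℝ) :
    ((hmat i j t)ᵀ * X * hmat i j t) p p = X p p := by
  rw [conj_apply]
  simp [hmat_apply_ne hpi hpj, ite_mul, mul_ite]

lemma conj_ii {i j : Fin n} (hij : i ≠ j) (t : ℝ) (X : Matrix (Fin n) (Fin n) ℝ) :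
    ((hmat i j t)ᵀ * X * hmat i j t) i i
      = Real.cos t^2 * X i i - Real.sin t * Real.cos t * X i j
        - Real.cos t * Real.sin t * X j i + Real.sin t^2 * X j j := by
  rw [conj_apply]
  simp [hmat_apply_i hij, ite_mul, mul_ite, add_mul, mul_add, Finset.sum_add_distrib,
    Finset.mul_sum, hij, hij.symm]
  ring

lemma conj_jj {i j : Fin n} (hij : i ≠ j) (t : ℝ) (X : Matrix (Fin n) (Fin n) ℝ) :
    ((hmat i j t)ᵀ * X * hmat i j t) j j
      = Real.cos t^2 * X j j + Real.cos t * Real.sin t * X j i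
        + Real.sin t * Real.cos t * X i j + Real.sin t^2 * X i i := by
  rw [conj_apply]
  simp [hmat_apply_j hij, ite_mul, mul_ite, add_mul, mul_add, Finset.sum_add_distrib,
    Finset.mul_sum, hij, hij.symm]
  ring

lemma sq_sum_eq_trace (Y : Matrix (Fin n) (Fin n) ℝ) :
    ∑ p, ∑ q, (Y p q)^2 = Matrix.trace (Yᵀ * Y) := by
  rw [Finset.sum_comm]
  simp [Matrix.trace, Matrix.mul_apply, Matrix.diag, sq]

lemma sq_sum_conj (h X : Matrix (Fin n) (Fin n) ℝ) (hh : hᵀ * h = 1) :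
    ∑ p, ∑ q, ((hᵀ * X * h) p q)^2 = ∑ p, ∑ q, (X p q)^2 := by
  have hh' : h * hᵀ = 1 := mul_eq_one_comm.mp hh
  rw [sq_sum_eq_trace, sq_sum_eq_trace]
  have e1 : (hᵀ * X * h)ᵀ * (hᵀ * X * h) = hᵀ * (Xᵀ * X) * h := by
    have ht : (hᵀ * X * h)ᵀ = hᵀ * Xᵀ * h := by
      simp [Matrix.transpose_mul, Matrix.mul_assoc]
    rw [ht]
    calc hᵀ * Xᵀ * h * (hᵀ * X * h) = hᵀ * Xᵀ * (h * hᵀ) * X * h := by noncomm_ring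
      _ = hᵀ * (Xᵀ * X) * h := by rw [hh']; noncomm_ring
  rw [e1, Matrix.mul_assoc, Matrix.trace_mul_comm, Matrix.mul_assoc, hh', Matrix.mul_one]

lemma objF_eq (Ce N : Matrix (Fin n) (Fin n) ℝ) :
    objF Ce N = (1/2) * ((∑ p, ∑ q, (rotA Ce N p q)^2) - ∑ p, (rotA Ce N p p)^2) := by
  unfold objF frobNorm
  rw [Real.sq_sqrt (by positivity)]
  congr 1
  have key : ∀ p q : Fin n, ((rotA Ce N - diagPart (rotA Ce N)) p q)^2
      = (rotA Ce N p q)^2 - (if q = p then (rotA Ce N p p)^2 else 0) := by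
    intro p q
    by_cases h : q = p
    · subst h; simp [diagPart, Matrix.sub_apply, Matrix.diagonal_apply]
    · rw [if_neg h]
      simp only [diagPart, Matrix.sub_apply, Matrix.diagonal_apply,
        if_neg (fun hh : p = q => h hh.symm)]
      ring
  simp_rw [key, Finset.sum_sub_distrib, Finset.sum_ite_eq' Finset.univ, Finset.mem_univ,
    if_true]

lemma rotA_mul (Ce M h : Matrix (Fin n) (Fin n) ℝ) :
    rotA Ce (M * h) = hᵀ * rotA Ce M * h := by
  unfold rotA
  rw [Matrix.transpose_mul]
  noncomm_ring

lemma objF_givens (Ce M : Matrix (Fin n) (Fin n) ℝ) (hCe : Ceᵀ = Ce)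
    {i j : Fin n} (hij : i ≠ j) (hd : rotA Ce M i i = rotA Ce M j j) (t : ℝ) :
    objF Ce (M * NormedSpace.exp (t • Xi i j))
      = objF Ce M - (rotA Ce M i j)^2 * Real.sin (2*t)^2 := by
  set A := rotA Ce M with hA
  have hsymm : A j i = A i j := by
    have : Aᵀ = A := by
      rw [hA]; unfold rotA
      rw [Matrix.transpose_mul, Matrix.transpose_mul, Matrix.transpose_transpose, hCe,
        Matrix.mul_assoc]
    calc A j i = Aᵀ i j := rfl
      _ = A i j := by rw [this]
  rw [exp_givens hij, objF_eq, objF_eq, rotA_mul, ← hA]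
  rw [sq_sum_conj _ _ (hmat_orth hij t)]
  set c := Real.cos t
  set s := Real.sin t
  have hcs : s^2 + c^2 = 1 := Real.sin_sq_add_cos_sq t
  have eii : ((hmat i j t)ᵀ * A * hmat i j t) i i = A i i - (2*s*c) * A i j := by
    rw [conj_ii hij, hsymm, ← hd]
    linear_combination (A i i) * hcs
  have ejj : ((hmat i j t)ᵀ * A * hmat i j t) j j = A i i + (2*s*c) * A i j := by
    rw [conj_jj hij, hsymm, ← hd]
    linear_combination (A i i) * hcs
  have hsub : ∑ p, (((hmat i j t)ᵀ * A * hmat i j t) p p ^2 - (A p p)^2)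
      = (((hmat i j t)ᵀ * A * hmat i j t) i i ^2 - (A i i)^2)
        + (((hmat i j t)ᵀ * A * hmat i j t) j j ^2 - (A j j)^2) := by
    have e0 : ∑ p ∈ ({i, j} : Finset (Fin n)),
        (((hmat i j t)ᵀ * A * hmat i j t) p p ^2 - (A p p)^2)
        = ∑ p, (((hmat i j t)ᵀ * A * hmat i j t) p p ^2 - (A p p)^2) := by
      apply Finset.sum_subset (Finset.subset_univ _)
      intro p _ hp
      simp only [Finset.mem_insert, Finset.mem_singleton, not_or] at hp
      rw [conj_pp_ne hp.1 hp.2]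
      ring
    rw [← e0, Finset.sum_pair hij]
  rw [Finset.sum_sub_distrib] at hsub
  have hsin2 : Real.sin (2*t) = 2*s*c := Real.sin_two_mul t
  rw [eii, ejj, ← hd] at hsub
  have : ∑ p, ((hmat i j t)ᵀ * A * hmat i j t) p p ^ 2
      = (∑ p, (A p p)^2) + 2 * (A i j)^2 * Real.sin (2*t)^2 := by
    rw [hsin2]
    linarith [hsub, sq_nonneg (A i j)]
  rw [this]
  ring

lemma iterDeriv_formula (C a : ℝ) :
    iteratedDeriv 2 (fun t : ℝ => C - a^2 * Real.sin (2*t)^2) 0 = -8*a^2 := by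
  have hd1 : ∀ t : ℝ, HasDerivAt (fun t : ℝ => C - a^2 * Real.sin (2*t)^2)
      (-(4*a^2) * (Real.sin (2*t) * Real.cos (2*t))) t := by
    intro t
    have h2t : HasDerivAt (fun t : ℝ => 2*t) 2 t := by
      simpa using (hasDerivAt_id t).const_mul (2:ℝ)
    have hp : HasDerivAt (fun t : ℝ => Real.sin (2*t)^2)
        ((2:ℕ) * Real.sin (2*t) ^ 1 * (Real.cos (2*t) * 2)) t := h2t.sin.pow 2
    have := (hp.const_mul (a^2)).const_sub C
    refine this.congr_deriv ?_
    push_cast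
    ring
  have hderiv : deriv (fun t : ℝ => C - a^2 * Real.sin (2*t)^2)
      = fun t => -(4*a^2) * (Real.sin (2*t) * Real.cos (2*t)) :=
    funext fun t => (hd1 t).deriv
  rw [show (2:ℕ) = 1 + 1 from rfl, iteratedDeriv_succ, iteratedDeriv_one, hderiv]
  have h2t : HasDerivAt (fun t : ℝ => 2*t) 2 (0:ℝ) := by
    simpa using (hasDerivAt_id (0:ℝ)).const_mul (2:ℝ)
  have hD := (h2t.sin.mul h2t.cos).const_mul (-(4*a^2))
  rw [(show HasDerivAt (fun t : ℝ => -(4 * a ^ 2) * (Real.sin (2 * t) * Real.cos (2 * t))) _ 0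
    from hD).deriv]
  simp
  ring

end SSX

/-- **Strict saddle property with explicit escape direction**: at a non-optimal critical
point (`Ω(M) = 0`, `f(M) > 0`) there are indices `i < j` with `A_ii = A_jj`,
`A_ij ≠ 0`, `A_ij² ≥ 2f(M)/(n(n−1))`, and the Givens curve through `Ξ = E_ij − E_ji`
has second derivative `−8A_ij² ≤ −16f(M)/(n(n−1)) < 0` at `t = 0`. -/
theorem strict_saddle_explicit_direction {n : ℕ} (hn : 2 ≤ n)
    (Ce M : Matrix (Fin n) (Fin n) ℝ) (hCe : Ceᵀ = Ce) (hM : Mᵀ * M = 1)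
    (hcrit : genOmega Ce M = 0) (hpos : 0 < objF Ce M) :
    ∃ i j : Fin n, i < j ∧
      rotA Ce M i i = rotA Ce M j j ∧
      rotA Ce M i j ≠ 0 ∧
      2 * objF Ce M / ((n : ℝ) * ((n : ℝ) - 1)) ≤ rotA Ce M i j ^ 2 ∧
      iteratedDeriv 2
        (fun t : ℝ => objF Ce (M * NormedSpace.exp
            (t • (Matrix.single i j (1 : ℝ) - Matrix.single j i (1 : ℝ))))) 0
        = -8 * rotA Ce M i j ^ 2 ∧
      -8 * rotA Ce M i j ^ 2 ≤ -16 * objF Ce M / ((n : ℝ) * ((n : ℝ) - 1)) ∧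
      -16 * objF Ce M / ((n : ℝ) * ((n : ℝ) - 1)) < 0 := by
  classical
  set A := rotA Ce M with hA
  -- symmetry of A
  have hAT : Aᵀ = A := by
    rw [hA]; unfold rotA
    rw [Matrix.transpose_mul, Matrix.transpose_mul, Matrix.transpose_transpose, hCe,
      Matrix.mul_assoc]
  have hsymm : ∀ p q, A q p = A p q := by
    intro p q
    calc A q p = Aᵀ p q := rfl
      _ = A p q := by rw [hAT]
  -- criticality: off-diagonal entries pair with equal diagonal
  have hcrit' : ∀ p q : Fin n, A p q * (A q q - A p p) = 0 := by
    intro p q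
    have h0 := congrFun (congrFun hcrit p) q
    simp only [genOmega, diagPart, ← hA, Matrix.sub_apply, Matrix.mul_diagonal,
      Matrix.diagonal_mul, Matrix.zero_apply] at h0
    linear_combination h0
  -- the off-diagonal pair set
  set sne : Finset (Fin n × Fin n) :=
    Finset.univ.filter (fun pq : Fin n × Fin n => pq.1 ≠ pq.2) with hsne
  have hne : sne.Nonempty := by
    refine ⟨(⟨0, by omega⟩, ⟨1, by omega⟩), ?_⟩
    simp [hsne, Prod.ext_iff, Fin.ext_iff]
  obtain ⟨pq, hpqmem, hmax⟩ := sne.exists_max_image (fun pq => (A pq.1 pq.2)^2) hne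
  obtain ⟨p, q⟩ := pq
  have hpq : p ≠ q := by simpa [hsne] using hpqmem
  -- off-diagonal entries
  have hoff : ∀ p q : Fin n, (A - diagPart A) p q = if p = q then 0 else A p q := by
    intro p q
    by_cases h : p = q
    · subst h; simp [diagPart, Matrix.sub_apply, Matrix.diagonal_apply]
    · simp [diagPart, Matrix.sub_apply, Matrix.diagonal_apply, h]
  -- 2 f = sum over off-diagonal pairs
  have h2f : 2 * objF Ce M = ∑ r ∈ sne, (A r.1 r.2)^2 := by
    have h1 : 2 * objF Ce M = ∑ r : Fin n × Fin n, ((A - diagPart A) r.1 r.2)^2 := by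
      unfold objF frobNorm
      rw [Real.sq_sqrt (by positivity), Fintype.sum_prod_type, ← hA]
      ring
    have h2 : ∑ r ∈ sne, ((A - diagPart A) r.1 r.2)^2
        = ∑ r : Fin n × Fin n, ((A - diagPart A) r.1 r.2)^2 := by
      apply Finset.sum_filter_of_ne
      intro r _ hne0
      intro heq
      apply hne0
      rw [hoff, if_pos heq]
      ring
    rw [h1, ← h2]
    apply Finset.sum_congr rfl
    intro r hr
    have hr' : r.1 ≠ r.2 := by simpa [hsne] using hr
    rw [hoff, if_neg hr']
  -- cardinality of the off-diagonal pair set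
  have hdiagcard : (Finset.univ.filter (fun r : Fin n × Fin n => r.1 = r.2)).card = n := by
    have himg : Finset.univ.filter (fun r : Fin n × Fin n => r.1 = r.2)
        = Finset.univ.image (fun p : Fin n => (p, p)) := by
      ext r
      simp only [Finset.mem_filter, Finset.mem_univ, true_and, Finset.mem_image]
      constructor
      · intro h
        exact ⟨r.1, by rw [Prod.ext_iff]; exact ⟨rfl, h⟩⟩
      · rintro ⟨a, ha⟩
        rw [← ha]
    rw [himg, Finset.card_image_of_injective _ (fun a b hab => (Prod.ext_iff.mp hab).1)]
    simp
  have hcard : sne.card = n * n - n := by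
    have hsplit := Finset.card_filter_add_card_filter_not
      (s := (Finset.univ : Finset (Fin n × Fin n))) (p := fun r : Fin n × Fin n => r.1 = r.2)
    have huniv : (Finset.univ : Finset (Fin n × Fin n)).card = n * n := by
      simp [Finset.card_univ]
    have : sne.card = (Finset.univ.filter (fun r : Fin n × Fin n => ¬ r.1 = r.2)).card := rfl
    omega
  have hD0 : (0:ℝ) < (n:ℝ) * ((n:ℝ) - 1) := by
    have h2 : (2:ℝ) ≤ (n:ℝ) := by exact_mod_cast hn
    nlinarith
  have hcast : ((sne.card : ℕ) : ℝ) = (n:ℝ) * ((n:ℝ) - 1) := by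
    have hle : n ≤ n * n := Nat.le_mul_of_pos_left n (by omega)
    rw [hcard, Nat.cast_sub hle]
    push_cast
    ring
  -- bound
  have hb : 2 * objF Ce M ≤ ((n:ℝ) * ((n:ℝ) - 1)) * (A p q)^2 := by
    rw [h2f, ← hcast]
    calc ∑ r ∈ sne, (A r.1 r.2)^2 ≤ sne.card • ((A p q)^2) :=
          Finset.sum_le_card_nsmul _ _ _ (fun x hx => hmax x hx)
      _ = ((sne.card : ℕ) : ℝ) * (A p q)^2 := by rw [nsmul_eq_mul]
  have hbound : 2 * objF Ce M / ((n:ℝ) * ((n:ℝ) - 1)) ≤ (A p q)^2 := by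
    rw [div_le_iff₀ hD0]
    linarith [hb]
  have hane0 : A p q ≠ 0 := by
    intro h0
    rw [h0] at hb
    simp at hb
    linarith
  have hdiagpq : A q q = A p p := by
    have := hcrit' p q
    rcases mul_eq_zero.mp this with h | h
    · exact absurd h hane0
    · linarith [sub_eq_zero.mp h]
  -- main helper
  have main : ∀ i j : Fin n, i < j → A i i = A j j → A i j ≠ 0 →
      2 * objF Ce M / ((n : ℝ) * ((n : ℝ) - 1)) ≤ A i j ^ 2 →
      (∃ i j : Fin n, i < j ∧
        rotA Ce M i i = rotA Ce M j j ∧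
        rotA Ce M i j ≠ 0 ∧
        2 * objF Ce M / ((n : ℝ) * ((n : ℝ) - 1)) ≤ rotA Ce M i j ^ 2 ∧
        iteratedDeriv 2
          (fun t : ℝ => objF Ce (M * NormedSpace.exp
              (t • (Matrix.single i j (1 : ℝ) - Matrix.single j i (1 : ℝ))))) 0
          = -8 * rotA Ce M i j ^ 2 ∧
        -8 * rotA Ce M i j ^ 2 ≤ -16 * objF Ce M / ((n : ℝ) * ((n : ℝ) - 1)) ∧
        -16 * objF Ce M / ((n : ℝ) * ((n : ℝ) - 1)) < 0) := by
    intro i j h1 h2 h3 h4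
    refine ⟨i, j, h1, h2, h3, h4, ?_, ?_, ?_⟩
    · have hfun : (fun t : ℝ => objF Ce (M * NormedSpace.exp
            (t • (Matrix.single i j (1 : ℝ) - Matrix.single j i (1 : ℝ))))) =
          fun t : ℝ => objF Ce M - (A i j)^2 * Real.sin (2*t)^2 := by
        funext t
        exact SSX.objF_givens Ce M hCe (Fin.ne_of_lt h1) h2 t
      rw [hfun, SSX.iterDeriv_formula]
    · have heq : -16 * objF Ce M / ((n:ℝ) * ((n:ℝ) - 1))
          = -8 * (2 * objF Ce M / ((n:ℝ) * ((n:ℝ) - 1))) := by ring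
      rw [heq]
      nlinarith [h4]
    · exact div_neg_of_neg_of_pos (by linarith) hD0
  rcases lt_or_gt_of_ne hpq with h | h
  · exact main p q h hdiagpq.symm hane0 hbound
  · refine main q p h hdiagpq ?_ ?_
    · rw [hsymm]; exact hane0
    · rw [hsymm]; exact hbound
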